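/- Let R be a commutative ring equipped with an exhaustive Γ-filtration FR = {F_γR}_{γ∈Γ}, where Γ is a totally ordered monoid, and set R₀ = F₀R. Let I be an ideal of the free R-algebra R⟨X⟩ = R⟨X₁,...,Xₙ⟩ generated by a subset G ⊆ R₀⟨X⟩ which is a monic Gröbner basis of I in R⟨X⟩ with respect to a monomial ordering ≺ on B_R, and assume LM(g) ≠ 1 for every g ∈ G. Then the R-algebra A = R⟨X⟩/I can be endowed with the exhaustive Γ-filtration FA = {F_γA}_{γ∈Γ}, where F_γA = { Σ_i λ_i w̄_i : λ_i ∈ F_γR, w̄_i ∈ N̄(G) } and N̄(G) is the canonical image of N(G) in A, and this filtration satisfies F_γR = R ∩ F_γA for every γ ∈ Γ (i.e. FR extends naturally to FA). -/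

import Mathlib

open scoped Classical

/-- Words in the alphabet `X₁,...,Xₙ`: the standard basis `B` of monomials of the free algebra. -/
abbrev Word (n : ℕ) : Type := FreeMonoid (Fin n)

/-- The free `R`-algebra `R⟨X₁,...,Xₙ⟩`, realized as the monoid algebra on words. -/
abbrev FreeAlg (R : Type) [CommRing R] (n : ℕ) : Type := MonoidAlgebra R (Word n)

/-- `v` divides `u` as words: `u = w * v * s` for some words `w, s`. -/
def WordDvd {n : ℕ} (v u : Word n) : Prop := ∃ w s : Word n, u = w * v * s

/-- A monomial ordering on the words in `X₁,...,Xₙ`: a well-ordering `≺` such that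
(M1) `u ≺ v` implies `w*u*s ≺ w*v*s`, and (M2) `w = u*v` implies `u ⪯ w` and `v ⪯ w`. -/
structure MonomialOrdering (n : ℕ) where
  lt : Word n → Word n → Prop
  strictTotal : IsStrictTotalOrder (Word n) lt
  wellFounded : WellFounded lt
  mul_compat : ∀ w u v s : Word n, lt u v → lt (w * u * s) (w * v * s)
  factor_le : ∀ u v : Word n, ¬ lt (u * v) u ∧ ¬ lt (u * v) v

namespace MonomialOrdering

/-- `u ⪯ v` for a monomial ordering. -/
def le {n : ℕ} (o : MonomialOrdering n) (u v : Word n) : Prop := u = v ∨ o.lt u v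

end MonomialOrdering

/-- The leading monomial `LM(f)` of `f`: the `≺`-greatest word occurring in `f`
(with junk value `1` if `f = 0`). -/
noncomputable def LM {R : Type} [CommRing R] {n : ℕ} (o : MonomialOrdering n)
    (f : FreeAlg R n) : Word n :=
  if h : ∃ w, w ∈ f.coeff.support ∧ ∀ u ∈ f.coeff.support, o.le u w then h.choose else 1

/-- The leading coefficient `LC(f)` of `f`: the coefficient of `LM(f)` in `f`. -/
noncomputable def LC {R : Type} [CommRing R] {n : ℕ} (o : MonomialOrdering n)
    (f : FreeAlg R n) : R := f.coeff (LM o f)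

/-- A subset `G` is monic if every `g ∈ G` is nonzero with leading coefficient `1`. -/
def IsMonicSet {R : Type} [CommRing R] {n : ℕ} (o : MonomialOrdering n)
    (G : Set (FreeAlg R n)) : Prop := ∀ g ∈ G, g ≠ 0 ∧ LC o g = 1

/-- `G` is a monic Gröbner basis of the two-sided ideal `I`: a monic subset of `I` such that
the leading monomial of every nonzero `f ∈ I` is divisible by `LM(g)` for some `g ∈ G`. -/
def IsMonicGB {R : Type} [CommRing R] {n : ℕ} (o : MonomialOrdering n)
    (G : Set (FreeAlg R n)) (I : TwoSidedIdeal (FreeAlg R n)) : Prop :=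
  (∀ g ∈ G, g ∈ I) ∧ IsMonicSet o G ∧
    ∀ f : FreeAlg R n, f ∈ I → f ≠ 0 → ∃ g ∈ G, WordDvd (LM o g) (LM o f)

/-- The word `u` viewed as a monomial (with coefficient `1`) of the free algebra. -/
noncomputable def mono (R : Type) [CommRing R] {n : ℕ} (u : Word n) : FreeAlg R n :=
  MonoidAlgebra.single u 1

/-- `f` has a Gröbner representation `f = Σ_{i} λ_i u_i g_i v_i` with
`LM(u_i g_i v_i) ⪯ LM(f)` whenever `λ_i ≠ 0`. -/
def HasGroebnerRep {R : Type} [CommRing R] {n : ℕ} (o : MonomialOrdering n)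
    (G : Set (FreeAlg R n)) (f : FreeAlg R n) : Prop :=
  ∃ (m : ℕ) (lam : Fin m → R) (u v : Fin m → Word n) (g : Fin m → FreeAlg R n),
    (∀ i, g i ∈ G) ∧
    f = ∑ i, lam i • (mono R (u i) * g i * mono R (v i)) ∧
    ∀ i, lam i ≠ 0 → o.le (LM o (mono R (u i) * g i * mono R (v i))) (LM o f)

/-- The set `N(G)` of normal words (mod `G`): words divisible by no `LM(g)`, `g ∈ G`. -/
def NSet {R : Type} [CommRing R] {n : ℕ} (o : MonomialOrdering n)
    (G : Set (FreeAlg R n)) : Set (Word n) :=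
  {u : Word n | ∀ g ∈ G, ¬ WordDvd (LM o g) u}

/-- `f` is a normal element (mod `G`): every word occurring in `f` is normal. -/
def IsNormal {R : Type} [CommRing R] {n : ℕ} (o : MonomialOrdering n)
    (G : Set (FreeAlg R n)) (f : FreeAlg R n) : Prop :=
  ∀ u ∈ f.coeff.support, u ∈ NSet o G

/-- `G` is LM-reduced: `LM(g) ∤ LM(g')` for distinct `g, g' ∈ G`. -/
def LMReduced {R : Type} [CommRing R] {n : ℕ} (o : MonomialOrdering n)
    (G : Set (FreeAlg R n)) : Prop :=
  ∀ g ∈ G, ∀ g' ∈ G, g ≠ g' → ¬ WordDvd (LM o g) (LM o g')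

/-- An exhaustive `Γ`-filtration on a ring `S`, where `Γ` is a totally ordered
(not necessarily commutative) additive monoid: a family of additive subgroups
`F γ` of `S` with (F1) `S = ∪_γ F γ`, (F2) `F γ₁ ⊆ F γ₂` for `γ₁ < γ₂`,
(F3) `F γ · F τ ⊆ F (γ + τ)`, (F4) `1 ∈ F 0`. -/
structure RingFiltration (Γ : Type) [AddMonoid Γ] [LinearOrder Γ] (S : Type) [Ring S] where
  F : Γ → AddSubgroup S
  exhaustive : ∀ s : S, ∃ γ : Γ, s ∈ F γ
  mono : ∀ ⦃γ₁ γ₂ : Γ⦄, γ₁ < γ₂ → F γ₁ ≤ F γ₂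
  mul_mem : ∀ ⦃γ τ : Γ⦄ ⦃a b : S⦄, a ∈ F γ → b ∈ F τ → a * b ∈ F (γ + τ)
  one_mem : 1 ∈ F 0

/-- The quotient ring `A = R⟨X₁,...,Xₙ⟩/I` of the free algebra by a two-sided ideal `I`. -/
abbrev QuotAlg {R : Type} [CommRing R] {n : ℕ} (I : TwoSidedIdeal (FreeAlg R n)) : Type :=
  RingQuot (fun a b : FreeAlg R n => a - b ∈ I)

/-- The canonical projection `R⟨X₁,...,Xₙ⟩ → A = R⟨X⟩/I`. -/
noncomputable def quotProj {R : Type} [CommRing R] {n : ℕ}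
    (I : TwoSidedIdeal (FreeAlg R n)) : FreeAlg R n →+* QuotAlg I :=
  RingQuot.mkRingHom (fun a b : FreeAlg R n => a - b ∈ I)

/-- The `Γ`-filtration `F_γA = {Σᵢ λᵢ·w̄ᵢ : λᵢ ∈ F_γR, wᵢ ∈ N(G)}` on `A = R⟨X⟩/I`
induced by a filtration of `R` and the normal words mod `G`:  it is the additive subgroup of
`A` generated by the classes of the elements `λ·u` with `λ ∈ F_γR` and `u ∈ N(G)`. -/
noncomputable def inducedFiltration {Γ : Type} [AddMonoid Γ] [LinearOrder Γ]
    {R : Type} [CommRing R] {n : ℕ} (FR : RingFiltration Γ R) (o : MonomialOrdering n)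
    (G : Set (FreeAlg R n)) (I : TwoSidedIdeal (FreeAlg R n)) (γ : Γ) :
    AddSubgroup (QuotAlg I) :=
  AddSubgroup.closure
    {x : QuotAlg I | ∃ lam ∈ FR.F γ, ∃ u ∈ NSet o G,
      x = quotProj I (MonoidAlgebra.single u lam)}

/-! ### Auxiliary lemmas -/

section Aux

variable {Γ : Type} [AddMonoid Γ] [LinearOrder Γ]
variable {R : Type} [CommRing R] {n : ℕ}

lemma MonomialOrdering.trich (o : MonomialOrdering n) (a b : Word n) :
    o.lt a b ∨ a = b ∨ o.lt b a := by
  haveI := o.strictTotal; exact trichotomous a b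

lemma MonomialOrdering.lt_trans' (o : MonomialOrdering n) {a b c : Word n}
    (h1 : o.lt a b) (h2 : o.lt b c) : o.lt a c :=
  o.strictTotal.trans a b c h1 h2

lemma MonomialOrdering.le_refl' (o : MonomialOrdering n) (a : Word n) : o.le a a :=
  Or.inl rfl

/-- A nonempty finite set of words has an `o`-greatest element. -/
lemma exists_o_max (o : MonomialOrdering n) (s : Finset (Word n)) (hs : s.Nonempty) :
    ∃ w ∈ s, ∀ u ∈ s, o.le u w := by
  induction hs using Finset.Nonempty.cons_induction with
  | singleton a => exact ⟨a, Finset.mem_singleton_self a, fun u hu => by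
      rw [Finset.mem_singleton] at hu; exact Or.inl hu⟩
  | cons a s ha hs ih =>
    obtain ⟨w, hw, hmax⟩ := ih
    rcases o.trich a w with h | h | h
    · exact ⟨w, Finset.mem_cons_of_mem hw, fun u hu => by
        rcases Finset.mem_cons.mp hu with rfl | hu
        · exact Or.inr h
        · exact hmax u hu⟩
    · exact ⟨w, Finset.mem_cons_of_mem hw, fun u hu => by
        rcases Finset.mem_cons.mp hu with rfl | hu
        · exact Or.inl h
        · exact hmax u hu⟩
    · refine ⟨a, Finset.mem_cons_self a s, fun u hu => ?_⟩
      rcases Finset.mem_cons.mp hu with rfl | hu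
      · exact Or.inl rfl
      · rcases hmax u hu with rfl | hlt
        · exact Or.inr h
        · exact Or.inr (o.lt_trans' hlt h)

lemma LM_spec (o : MonomialOrdering n) {f : FreeAlg R n} (hf : f ≠ 0) :
    LM o f ∈ f.coeff.support ∧ ∀ u ∈ f.coeff.support, o.le u (LM o f) := by
  have h : ∃ w, w ∈ f.coeff.support ∧ ∀ u ∈ f.coeff.support, o.le u w := by
    obtain ⟨w, hw, hmax⟩ := exists_o_max o f.coeff.support
      (Finsupp.support_nonempty_iff.mpr (mt MonoidAlgebra.coeff_eq_zero.mp hf))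
    exact ⟨w, hw, hmax⟩
  rw [LM, dif_pos h]
  exact h.choose_spec

lemma lt_LM_of_mem (o : MonomialOrdering n) {f : FreeAlg R n} (hf : f ≠ 0) {v : Word n}
    (hv : v ∈ f.coeff.support) (hne : v ≠ LM o f) : o.lt v (LM o f) := by
  rcases (LM_spec o hf).2 v hv with h | h
  · exact absurd h hne
  · exact h

lemma word_midInj (w s : Word n) : Function.Injective (fun v : Word n => w * v * s) := by
  intro a b h
  simp only at h
  rw [mul_assoc, mul_assoc] at h
  exact mul_right_cancel (mul_left_cancel h)

lemma wordDvd_one {v : Word n} (h : WordDvd v (1 : Word n)) : v = 1 := by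
  obtain ⟨w, s, hws⟩ := h
  have h' := congrArg FreeMonoid.toList hws
  simp only [FreeMonoid.toList_one, FreeMonoid.toList_mul] at h'
  rcases List.append_eq_nil_iff.mp h'.symm with ⟨h1, h2⟩
  rcases List.append_eq_nil_iff.mp h1 with ⟨_, h3⟩
  exact FreeMonoid.toList.injective (by simp [h3, FreeMonoid.toList_one])

lemma mono_mul_mul_mono (w s : Word n) (h : FreeAlg R n) :
    (mono R w * h * mono R s).coeff = Finsupp.mapDomain (fun v : Word n => w * v * s) h.coeff := by
  induction h using MonoidAlgebra.induction_linear with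
  | zero => simp
  | add f g hf hg => rw [mul_add, add_mul, MonoidAlgebra.coeff_add, hf, hg,
      MonoidAlgebra.coeff_add, Finsupp.mapDomain_add]
  | single a b =>
    show (MonoidAlgebra.single w (1 : R) * MonoidAlgebra.single a b *
        MonoidAlgebra.single s (1 : R)).coeff = _
    rw [MonoidAlgebra.single_mul_single, MonoidAlgebra.single_mul_single, one_mul, mul_one,
      MonoidAlgebra.coeff_single, MonoidAlgebra.coeff_single, Finsupp.mapDomain_single]

lemma twoSided_smul_mem (I : TwoSidedIdeal (FreeAlg R n)) (c : R) {x : FreeAlg R n}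
    (hx : x ∈ I) : c • x ∈ I := by
  rw [Algebra.smul_def]
  exact I.mul_mem_left _ _ hx

lemma quotProj_eq_of_sub_mem {I : TwoSidedIdeal (FreeAlg R n)} {a b : FreeAlg R n}
    (h : a - b ∈ I) : quotProj I a = quotProj I b :=
  RingQuot.mkRingHom_rel h

lemma sub_mem_of_quotProj_eq {I : TwoSidedIdeal (FreeAlg R n)} {a b : FreeAlg R n}
    (h : quotProj I a = quotProj I b) : a - b ∈ I := by
  have hw : ∀ ⦃x y : FreeAlg R n⦄, x - y ∈ I → I.ringCon.mk' x = I.ringCon.mk' y := by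
    intro x y hxy
    exact Quot.sound ((I.rel_iff x y).mpr hxy)
  have := congrArg (RingQuot.lift ⟨I.ringCon.mk', hw⟩) h
  rw [quotProj, RingQuot.lift_mkRingHom_apply, RingQuot.lift_mkRingHom_apply] at this
  exact (I.rel_iff a b).mp (Quotient.eq''.mp this)

lemma F_mono_le (FR : RingFiltration Γ R) {γ₁ γ₂ : Γ} (h : γ₁ ≤ γ₂) :
    FR.F γ₁ ≤ FR.F γ₂ := by
  rcases lt_or_eq_of_le h with h | rfl
  · exact FR.mono h
  · exact le_rfl

/-- The key reduction lemma: every word is congruent mod `I` to a normal polynomial with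
coefficients in `F₀R`. -/
lemma reduction (FR : RingFiltration Γ R) (o : MonomialOrdering n)
    (G : Set (FreeAlg R n)) (I : TwoSidedIdeal (FreeAlg R n))
    (hG0 : ∀ g ∈ G, ∀ u : Word n, g.coeff u ∈ FR.F 0) (hGI : ∀ g ∈ G, g ∈ I)
    (hmonic : IsMonicSet o G) (u : Word n) :
    ∃ r : FreeAlg R n, (∀ w, r.coeff w ∈ FR.F 0) ∧ (∀ w ∈ r.coeff.support, w ∈ NSet o G) ∧
      MonoidAlgebra.single u (1 : R) - r ∈ I := by
  induction u using WellFounded.induction o.wellFounded with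
  | _ u IH =>
  by_cases hu : u ∈ NSet o G
  · refine ⟨MonoidAlgebra.single u 1, ?_, ?_, ?_⟩
    · intro w
      rw [MonoidAlgebra.single_apply]
      split
      · exact FR.one_mem
      · exact (FR.F 0).zero_mem
    · intro w hw
      have := Finsupp.support_single_subset hw
      rw [Finset.mem_singleton] at this
      exact this ▸ hu
    · rw [sub_self]; exact I.zero_mem
  · -- `u` is divisible by some `LM g`
    simp only [NSet, Set.mem_setOf_eq, not_forall] at hu
    obtain ⟨g, hgG, hdvd⟩ := hu
    simp only [not_not] at hdvd
    obtain ⟨w, s, hu⟩ := hdvd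
    obtain ⟨hg0, hgc⟩ := hmonic g hgG
    set L := LM o g with hL
    set h : FreeAlg R n := MonoidAlgebra.single L 1 - g with hh
    have hhL : h.coeff L = 0 := by
      rw [hh, MonoidAlgebra.coeff_sub, Finsupp.sub_apply, MonoidAlgebra.coeff_single,
        Finsupp.single_eq_same]
      have : g.coeff L = 1 := hgc
      rw [this, sub_self]
    have hsupp : ∀ v, h.coeff v ≠ 0 → o.lt v L := by
      intro v hv
      have hvne : v ≠ L := by rintro rfl; exact hv hhL
      have hval : h.coeff v = -g.coeff v := by
        rw [hh, MonoidAlgebra.coeff_sub, Finsupp.sub_apply, MonoidAlgebra.coeff_single,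
          Finsupp.single_eq_of_ne' (Ne.symm hvne), zero_sub]
      have hvg : v ∈ g.coeff.support := by
        rw [Finsupp.mem_support_iff]
        intro h0
        rw [hval, h0, neg_zero] at hv
        exact hv rfl
      exact lt_LM_of_mem o hg0 hvg hvne
    have hcoef : ∀ v, h.coeff v ∈ FR.F 0 := by
      intro v
      by_cases hv : v = L
      · rw [hv, hhL]; exact (FR.F 0).zero_mem
      · have : h.coeff v = -g.coeff v := by
          rw [hh, MonoidAlgebra.coeff_sub, Finsupp.sub_apply, MonoidAlgebra.coeff_single,
            Finsupp.single_eq_of_ne' (Ne.symm hv), zero_sub]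
        rw [this]
        exact (FR.F 0).neg_mem (hG0 g hgG v)
    set d : FreeAlg R n := mono R w * h * mono R s with hd
    have hdm : d.coeff = Finsupp.mapDomain (fun v : Word n => w * v * s) h.coeff :=
      mono_mul_mul_mono w s h
    have hinj := word_midInj (n := n) w s
    have hdlt : ∀ t ∈ d.coeff.support, o.lt t u := by
      intro t ht
      rw [hdm] at ht
      have := Finsupp.mapDomain_support ht
      rw [Finset.mem_image] at this
      obtain ⟨v, hv, rfl⟩ := this
      rw [hu]
      exact o.mul_compat w v L s (hsupp v (Finsupp.mem_support_iff.mp hv))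
    have hdco : ∀ t, d.coeff t ∈ FR.F 0 := by
      intro t
      by_cases ht : t ∈ d.coeff.support
      · rw [hdm] at ht ⊢
        have := Finsupp.mapDomain_support ht
        rw [Finset.mem_image] at this
        obtain ⟨v, _, rfl⟩ := this
        rw [Finsupp.mapDomain_apply hinj]
        exact hcoef v
      · rw [Finsupp.notMem_support_iff.mp ht]
        exact (FR.F 0).zero_mem
    have hud : MonoidAlgebra.single u (1 : R) - d ∈ I := by
      have e1 : mono R w * MonoidAlgebra.single L (1 : R) * mono R s =
          MonoidAlgebra.single u 1 := by
        rw [hu]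
        show MonoidAlgebra.single w (1 : R) * MonoidAlgebra.single L (1 : R) *
            MonoidAlgebra.single s (1 : R) = _
        rw [MonoidAlgebra.single_mul_single, MonoidAlgebra.single_mul_single, one_mul, mul_one]
      have e2 : MonoidAlgebra.single u (1 : R) - d = mono R w * g * mono R s := by
        rw [← e1, hd, hh, mul_sub, sub_mul]
        abel
      rw [e2]
      exact I.mul_mem_right _ _ (I.mul_mem_left _ _ (hGI g hgG))
    -- use the induction hypothesis on each word of `d`
    have IH' : ∀ t, o.lt t u → ∃ r : FreeAlg R n, (∀ w', r.coeff w' ∈ FR.F 0) ∧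
        (∀ w' ∈ r.coeff.support, w' ∈ NSet o G) ∧ MonoidAlgebra.single t (1 : R) - r ∈ I :=
      fun t ht => IH t ht
    classical
    set Fr : Word n → FreeAlg R n := fun t =>
      if ht : o.lt t u then (IH' t ht).choose else 0 with hFr
    have Fr1 : ∀ t (ht : o.lt t u), (∀ w', (Fr t).coeff w' ∈ FR.F 0) ∧
          (∀ w' ∈ (Fr t).coeff.support, w' ∈ NSet o G) ∧
        MonoidAlgebra.single t (1 : R) - Fr t ∈ I := by
      intro t ht
      rw [hFr]
      simp only [dif_pos ht]
      exact (IH' t ht).choose_spec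
    set r : FreeAlg R n := ∑ t ∈ d.coeff.support, d.coeff t • Fr t with hr
    refine ⟨r, ?_, ?_, ?_⟩
    · intro w'
      rw [hr, MonoidAlgebra.coeff_sum, Finsupp.finset_sum_apply]
      refine sum_mem fun t ht => ?_
      rw [MonoidAlgebra.coeff_smul_apply, smul_eq_mul]
      have := FR.mul_mem (hdco t) ((Fr1 t (hdlt t ht)).1 w')
      rwa [add_zero] at this
    · intro w' hw'
      rw [hr, MonoidAlgebra.coeff_sum] at hw'
      obtain ⟨t, ht, hw't⟩ := Finsupp.mem_support_finset_sum w' hw'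
      rw [MonoidAlgebra.coeff_smul] at hw't
      have := Finsupp.support_smul hw't
      exact (Fr1 t (hdlt t ht)).2.1 w' this
    · have hdr : d - r = ∑ t ∈ d.coeff.support,
          d.coeff t • (MonoidAlgebra.single t (1 : R) - Fr t) := by
        have hdsum : d = ∑ t ∈ d.coeff.support, d.coeff t • MonoidAlgebra.single t (1 : R) := by
          conv_lhs => rw [← MonoidAlgebra.sum_coeff_single d]
          rw [Finsupp.sum]
          refine Finset.sum_congr rfl fun t _ => ?_
          rw [MonoidAlgebra.smul_single, smul_eq_mul, mul_one]
        rw [hr]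
        nth_rewrite 1 [hdsum]
        simp only [smul_sub, Finset.sum_sub_distrib]
      have : MonoidAlgebra.single u (1 : R) - r =
          (MonoidAlgebra.single u (1 : R) - d) + (d - r) := by abel
      rw [this, hdr]
      refine I.add_mem hud (sum_mem fun t ht => ?_)
      exact twoSided_smul_mem I _ ((Fr1 t (hdlt t ht)).2.2)

/-- Lemma A: each single monomial with coefficient in `F_γR` lands in `F_γA`. -/
lemma single_mem_induced (FR : RingFiltration Γ R) (o : MonomialOrdering n)
    (G : Set (FreeAlg R n)) (I : TwoSidedIdeal (FreeAlg R n))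
    (hG0 : ∀ g ∈ G, ∀ u : Word n, g.coeff u ∈ FR.F 0) (hGI : ∀ g ∈ G, g ∈ I)
    (hmonic : IsMonicSet o G) {γ : Γ} {lam : R} (hlam : lam ∈ FR.F γ) (u : Word n) :
    quotProj I (MonoidAlgebra.single u lam) ∈ inducedFiltration FR o G I γ := by
  obtain ⟨r, hrc, hrn, hrI⟩ := reduction FR o G I hG0 hGI hmonic u
  have h1 : quotProj I (MonoidAlgebra.single u lam) = quotProj I (lam • r) := by
    apply quotProj_eq_of_sub_mem
    have : MonoidAlgebra.single u lam - lam • r =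
        lam • (MonoidAlgebra.single u (1 : R) - r) := by
      rw [smul_sub, MonoidAlgebra.smul_single, smul_eq_mul, mul_one]
    rw [this]
    exact twoSided_smul_mem I _ hrI
  have h2 : lam • r = ∑ t ∈ r.coeff.support, MonoidAlgebra.single t (lam * r.coeff t) := by
    conv_lhs => rw [← MonoidAlgebra.sum_coeff_single r]
    rw [Finsupp.sum, Finset.smul_sum]
    refine Finset.sum_congr rfl fun t _ => ?_
    rw [MonoidAlgebra.smul_single, smul_eq_mul]
  rw [h1, h2, map_sum]
  refine sum_mem fun t ht => ?_
  apply AddSubgroup.subset_closure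
  refine ⟨lam * r.coeff t, ?_, t, hrn t ht, rfl⟩
  have := FR.mul_mem hlam (hrc t)
  rwa [add_zero] at this

/-- Any polynomial with all coefficients in `F_γR` maps into `F_γA`. -/
lemma mem_induced_of_coeffs (FR : RingFiltration Γ R) (o : MonomialOrdering n)
    (G : Set (FreeAlg R n)) (I : TwoSidedIdeal (FreeAlg R n))
    (hG0 : ∀ g ∈ G, ∀ u : Word n, g.coeff u ∈ FR.F 0) (hGI : ∀ g ∈ G, g ∈ I)
    (hmonic : IsMonicSet o G) {γ : Γ} {p : FreeAlg R n} (hp : ∀ w, p.coeff w ∈ FR.F γ) :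
    quotProj I p ∈ inducedFiltration FR o G I γ := by
  have hp' : p = ∑ t ∈ p.coeff.support, MonoidAlgebra.single t (p.coeff t) :=
    (MonoidAlgebra.sum_coeff_single p).symm
  rw [hp', map_sum]
  exact sum_mem fun t _ => single_mem_induced FR o G I hG0 hGI hmonic (hp t) t

/-- Membership in the induced filtration, characterized by normal representatives. -/
lemma mem_induced_iff (FR : RingFiltration Γ R) (o : MonomialOrdering n)
    (G : Set (FreeAlg R n)) (I : TwoSidedIdeal (FreeAlg R n)) (γ : Γ)
    (x : QuotAlg I) :
    x ∈ inducedFiltration FR o G I γ ↔ ∃ p : FreeAlg R n,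
      (∀ w ∈ p.coeff.support, w ∈ NSet o G) ∧ (∀ w, p.coeff w ∈ FR.F γ) ∧ x = quotProj I p := by
  classical
  set T : Set (FreeAlg R n) :=
    {p | ∃ lam ∈ FR.F γ, ∃ u ∈ NSet o G, p = MonoidAlgebra.single u lam} with hT
  have himg : {x : QuotAlg I | ∃ lam ∈ FR.F γ, ∃ u ∈ NSet o G,
      x = quotProj I (MonoidAlgebra.single u lam)} = ⇑(quotProj I) '' T := by
    ext y
    constructor
    · rintro ⟨lam, hlam, u, hu, rfl⟩
      exact ⟨MonoidAlgebra.single u lam, ⟨lam, hlam, u, hu, rfl⟩, rfl⟩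
    · rintro ⟨p, ⟨lam, hlam, u, hu, rfl⟩, rfl⟩
      exact ⟨lam, hlam, u, hu, rfl⟩
  -- the closure of T is exactly the subgroup of normal polynomials with coeffs in `F γ`
  set P : AddSubgroup (FreeAlg R n) :=
    { carrier := {p | (∀ w ∈ p.coeff.support, w ∈ NSet o G) ∧ ∀ w, p.coeff w ∈ FR.F γ}
      zero_mem' := by
        constructor
        · intro w hw; simp at hw
        · intro w; exact (FR.F γ).zero_mem
      add_mem' := by
        rintro a b ⟨ha1, ha2⟩ ⟨hb1, hb2⟩
        constructor
        · intro w hw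
          rw [MonoidAlgebra.coeff_add] at hw
          rcases Finset.mem_union.mp (Finsupp.support_add hw) with h | h
          · exact ha1 w h
          · exact hb1 w h
        · intro w
          rw [MonoidAlgebra.coeff_add, Finsupp.add_apply]
          exact (FR.F γ).add_mem (ha2 w) (hb2 w)
      neg_mem' := by
        rintro a ⟨ha1, ha2⟩
        constructor
        · intro w hw
          rw [MonoidAlgebra.coeff_neg, Finsupp.support_neg] at hw
          exact ha1 w hw
        · intro w
          rw [MonoidAlgebra.coeff_neg, Finsupp.neg_apply]
          exact (FR.F γ).neg_mem (ha2 w) } with hP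
  have hclT : AddSubgroup.closure T = P := by
    apply le_antisymm
    · rw [AddSubgroup.closure_le]
      rintro p ⟨lam, hlam, u, hu, rfl⟩
      constructor
      · intro w hw
        have := Finsupp.support_single_subset hw
        rw [Finset.mem_singleton] at this
        exact this ▸ hu
      · intro w
        rw [MonoidAlgebra.single_apply]
        split
        · exact hlam
        · exact (FR.F γ).zero_mem
    · intro p hp
      obtain ⟨hp1, hp2⟩ := hp
      rw [← MonoidAlgebra.sum_coeff_single p, Finsupp.sum]
      refine sum_mem fun t ht => ?_
      exact AddSubgroup.subset_closure ⟨p.coeff t, hp2 t, t, hp1 t ht, rfl⟩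
  have hmap : inducedFiltration FR o G I γ =
      AddSubgroup.map (quotProj I).toAddMonoidHom P := by
    rw [inducedFiltration, himg, ← hclT]
    exact (AddMonoidHom.map_closure (quotProj I).toAddMonoidHom T).symm
  rw [hmap]
  constructor
  · rintro ⟨p, hp, rfl⟩
    exact ⟨p, hp.1, hp.2, rfl⟩
  · rintro ⟨p, h1, h2, rfl⟩
    exact ⟨p, ⟨h1, h2⟩, rfl⟩

end Aux

/-- **Theorem 3.1.**  Let `R` be a commutative ring with an exhaustive `Γ`-filtration `FR`
(`Γ` a totally ordered monoid), `R₀ = F₀R`, and let the ideal `I` of `R⟨X₁,...,Xₙ⟩` be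
generated by a subset `G ⊆ R₀⟨X⟩` which is a monic Gröbner basis of `I` with `LM(g) ≠ 1` for
all `g ∈ G`.  Then `A = R⟨X⟩/I` carries the exhaustive `Γ`-filtration
`F_γA = {Σ λᵢ w̄ᵢ : λᵢ ∈ F_γR, w̄ᵢ ∈ N̄(G)}` (it satisfies (F1)–(F4)), and
`F_γR = R ∩ F_γA` for every `γ`, i.e. `FR` extends naturally to `FA`. -/
theorem filtration_extends_to_quotient {Γ : Type} [AddMonoid Γ] [LinearOrder Γ]
    {R : Type} [CommRing R] {n : ℕ} (FR : RingFiltration Γ R) (o : MonomialOrdering n)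
    (G : Set (FreeAlg R n)) (I : TwoSidedIdeal (FreeAlg R n))
    (hG0 : ∀ g ∈ G, ∀ u : Word n, g.coeff u ∈ FR.F 0)
    (hgen : I = TwoSidedIdeal.span G) (hGB : IsMonicGB o G I)
    (hLM1 : ∀ g ∈ G, LM o g ≠ 1) :
    (∀ a : QuotAlg I, ∃ γ : Γ, a ∈ inducedFiltration FR o G I γ) ∧
    (∀ ⦃γ₁ γ₂ : Γ⦄, γ₁ < γ₂ →
      inducedFiltration FR o G I γ₁ ≤ inducedFiltration FR o G I γ₂) ∧
    (∀ ⦃γ τ : Γ⦄ ⦃a b : QuotAlg I⦄, a ∈ inducedFiltration FR o G I γ →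
      b ∈ inducedFiltration FR o G I τ → a * b ∈ inducedFiltration FR o G I (γ + τ)) ∧
    ((1 : QuotAlg I) ∈ inducedFiltration FR o G I 0) ∧
    (∀ (γ : Γ) (lam : R),
      lam ∈ FR.F γ ↔
        quotProj I (MonoidAlgebra.single 1 lam) ∈ inducedFiltration FR o G I γ) := by
  classical
  obtain ⟨hGI, hmonic, hdiv⟩ := hGB
  refine ⟨?_, ?_, ?_, ?_, ?_⟩
  · -- (F1) exhaustive
    intro a
    obtain ⟨f, rfl⟩ := RingQuot.mkRingHom_surjective _ a
    by_cases hf : f = 0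
    · refine ⟨0, ?_⟩
      show quotProj I f ∈ _
      rw [hf, map_zero]
      exact (inducedFiltration FR o G I 0).zero_mem
    · set gam : Word n → Γ := fun w => (FR.exhaustive (f.coeff w)).choose with hgam
      have hgamspec : ∀ w, f.coeff w ∈ FR.F (gam w) := fun w =>
        (FR.exhaustive (f.coeff w)).choose_spec
      have hne : (f.coeff.support.image gam).Nonempty :=
        (Finsupp.support_nonempty_iff.mpr (mt MonoidAlgebra.coeff_eq_zero.mp hf)).image gam
      refine ⟨(f.coeff.support.image gam).max' hne, ?_⟩
      show quotProj I f ∈ _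
      refine mem_induced_of_coeffs FR o G I hG0 hGI hmonic fun w => ?_
      by_cases hw : w ∈ f.coeff.support
      · refine F_mono_le FR ?_ (hgamspec w)
        exact Finset.le_max' _ _ (Finset.mem_image_of_mem gam hw)
      · rw [Finsupp.notMem_support_iff.mp hw]
        exact (FR.F _).zero_mem
  · -- (F2) monotone
    intro γ₁ γ₂ h
    apply AddSubgroup.closure_mono
    rintro x ⟨lam, hlam, u, hu, rfl⟩
    exact ⟨lam, FR.mono h hlam, u, hu, rfl⟩
  · -- (F3) multiplicative
    intro γ τ a b ha hb
    rw [mem_induced_iff] at ha hb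
    obtain ⟨p, _, hp2, rfl⟩ := ha
    obtain ⟨q, _, hq2, rfl⟩ := hb
    rw [← map_mul]
    refine mem_induced_of_coeffs FR o G I hG0 hGI hmonic fun t => ?_
    rw [MonoidAlgebra.coeff_mul]
    refine sum_mem fun u hu => sum_mem fun v hv => ?_
    dsimp only
    split
    · exact FR.mul_mem (hp2 u) (hq2 v)
    · exact (FR.F _).zero_mem
  · -- (F4) one
    have h1 : (1 : QuotAlg I) = quotProj I (MonoidAlgebra.single 1 1) := by
      rw [← MonoidAlgebra.one_def, map_one]
    rw [h1]
    exact single_mem_induced FR o G I hG0 hGI hmonic FR.one_mem 1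
  · -- `F_γR = R ∩ F_γA`
    intro γ lam
    constructor
    · intro hlam
      exact single_mem_induced FR o G I hG0 hGI hmonic hlam 1
    · intro hmem
      rw [mem_induced_iff] at hmem
      obtain ⟨p, hp1, hp2, hx⟩ := hmem
      have hI : MonoidAlgebra.single (1 : Word n) lam - p ∈ I :=
        sub_mem_of_quotProj_eq hx
      by_cases hq : MonoidAlgebra.single (1 : Word n) lam - p = 0
      · have hpe : MonoidAlgebra.single (1 : Word n) lam = p := by
          rwa [sub_eq_zero] at hq
        have : lam = p.coeff 1 := by
          rw [← hpe, MonoidAlgebra.coeff_single, Finsupp.single_eq_same]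
        rw [this]
        exact hp2 1
      · exfalso
        obtain ⟨g, hg, hdvd'⟩ := hdiv _ hI hq
        set q : FreeAlg R n := MonoidAlgebra.single (1 : Word n) lam - p with hqdef
        have hLMq : LM o q ∈ q.coeff.support := (LM_spec o hq).1
        have hsub : q.coeff.support ⊆
            (MonoidAlgebra.single (1 : Word n) lam).coeff.support ∪ p.coeff.support := by
          intro t ht
          rw [hqdef, sub_eq_add_neg, MonoidAlgebra.coeff_add] at ht
          rcases Finset.mem_union.mp (Finsupp.support_add ht) with h | h
          · exact Finset.mem_union_left _ h
          · rw [MonoidAlgebra.coeff_neg, Finsupp.support_neg] at h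
            exact Finset.mem_union_right _ h
        rcases Finset.mem_union.mp (hsub hLMq) with h | h
        · have h1 : LM o q = 1 := by
            have := Finsupp.support_single_subset h
            rwa [Finset.mem_singleton] at this
          rw [h1] at hdvd'
          exact hLM1 g hg (wordDvd_one hdvd')
        · exact hp1 _ h g hg hdvd'
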